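/- arXiv:1503.08892 — 4 statements merged into one kernel-verified Lean document; each statement's English description precedes it below -/
import Mathlib

section
/- For every real number x, x · [(2/π)∫_{{ξ∈ℂ : |ξ|² > x²/2}} e^{-π|ξ|²}(2|ξ|² - x²) dA(ξ)] · e^{-πx²} = (4x/π²) e^{-3πx²/2}. In other words, the limit expected density of saddle critical values on a Riemann surface equals D^{1,1}_∞(x) = (4x/π²) e^{-3πx²/2}. -/
open MeasureTheory Real

lemma saddle_1d (c : ℝ) (hc : 0 ≤ c) :
    ∫ r in Set.Ioi (Real.sqrt c), Real.exp (-π * r ^ 2) * (2 * r ^ 3 - 2 * c * r)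
      = Real.exp (-π * c) / π ^ 2 := by
  set s := Real.sqrt c with hs
  have hπ : (0:ℝ) < π := Real.pi_pos
  set F : ℝ → ℝ := fun r => Real.exp (-π * r ^ 2) * ((c - 1 / π - r ^ 2) / π) with hF
  have hderiv : ∀ r ∈ Set.Ici s, HasDerivAt F
      (Real.exp (-π * r ^ 2) * (2 * r ^ 3 - 2 * c * r)) r := by
    intro r _
    have h1 : HasDerivAt (fun r : ℝ => -π * r ^ 2) (-π * (2 * r)) r := by
      simpa using ((hasDerivAt_pow 2 r).const_mul (-π))
    have h2 : HasDerivAt (fun r : ℝ => Real.exp (-π * r ^ 2)) (Real.exp (-π * r ^ 2) * (-π * (2 * r))) r := h1.exp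
    have h3 : HasDerivAt (fun r : ℝ => (c - 1 / π - r ^ 2) / π) (-(2 * r) / π) r := by
      have : HasDerivAt (fun r : ℝ => c - 1 / π - r ^ 2) (-(2 * r)) r := by
        simpa using ((hasDerivAt_pow 2 r).const_sub (c - 1/π))
      simpa using this.div_const π
    have := h2.mul h3
    refine HasDerivAt.congr_deriv this ?_
    field_simp
    ring
  have hnonneg : ∀ r ∈ Set.Ioi s, 0 ≤ Real.exp (-π * r ^ 2) * (2 * r ^ 3 - 2 * c * r) := by
    intro r hr
    have hr0 : 0 < r := lt_of_le_of_lt (Real.sqrt_nonneg c) hr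
    have hrc : c < r ^ 2 := by
      have := (Real.sqrt_lt' hr0).mp hr
      simpa using this
    have : 0 ≤ 2 * r ^ 3 - 2 * c * r := by nlinarith
    positivity
  have htend : Filter.Tendsto F Filter.atTop (nhds 0) := by
    have hu : Filter.Tendsto (fun r : ℝ => π * r ^ 2) Filter.atTop Filter.atTop := by
      exact (Filter.tendsto_pow_atTop (two_ne_zero)).const_mul_atTop hπ
    have h1 : Filter.Tendsto (fun u : ℝ => Real.exp (-u)) Filter.atTop (nhds 0) :=
      Real.tendsto_exp_neg_atTop_nhds_zero
    have hexp : Filter.Tendsto (fun r : ℝ => Real.exp (-(π * r ^ 2))) Filter.atTop (nhds 0) :=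
      h1.comp hu
    have hpow : Filter.Tendsto (fun u : ℝ => u * Real.exp (-u)) Filter.atTop (nhds 0) := by
      simpa using Real.tendsto_pow_mul_exp_neg_atTop_nhds_zero 1
    have hr2exp : Filter.Tendsto (fun r : ℝ => (π * r ^ 2) * Real.exp (-(π * r ^ 2)))
        Filter.atTop (nhds 0) := hpow.comp hu
    have key : Filter.Tendsto (fun r : ℝ =>
        Real.exp (-(π * r ^ 2)) * ((c - 1/π)/π) - (1/π^2) * ((π * r ^ 2) * Real.exp (-(π * r ^ 2))))
        Filter.atTop (nhds 0) := by
      have := (hexp.mul_const ((c - 1/π)/π)).sub (hr2exp.const_mul (1/π^2))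
      simpa using this
    refine key.congr (fun r => ?_)
    rw [hF]
    simp only [neg_mul]
    field_simp
  have := integral_Ioi_of_hasDerivAt_of_nonneg' hderiv hnonneg htend
  rw [this]
  have hs2 : s ^ 2 = c := Real.sq_sqrt hc
  simp only [hF, hs2]
  field_simp
  ring

theorem saddle_density (x : ℝ) :
    x * ((2 / π) * ∫ ξ in {ξ : ℂ | ‖ξ‖ ^ 2 > x ^ 2 / 2},
        Real.exp (-π * ‖ξ‖ ^ 2) * (2 * ‖ξ‖ ^ 2 - x ^ 2)) *
      Real.exp (-π * x ^ 2) =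
    (4 * x / π ^ 2) * Real.exp (-3 * π * x ^ 2 / 2) := by
  have hπ : (0:ℝ) < π := Real.pi_pos
  set c : ℝ := x ^ 2 / 2 with hc
  have hc0 : 0 ≤ c := by positivity
  set h : ℝ → ℝ := fun y => Real.exp (-π * y ^ 2) * (2 * y ^ 2 - x ^ 2) with hh
  set T : Set ℝ := {y : ℝ | y ^ 2 > c} with hT
  have hSmeas : MeasurableSet {ξ : ℂ | ‖ξ‖ ^ 2 > c} := by
    have : {ξ : ℂ | ‖ξ‖ ^ 2 > c} = (fun ξ : ℂ => ‖ξ‖ ^ 2) ⁻¹' Set.Ioi c := rfl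
    rw [this]
    exact ((continuous_norm.pow 2).measurable) measurableSet_Ioi
  have key : (∫ ξ in {ξ : ℂ | ‖ξ‖ ^ 2 > c}, h (‖ξ‖))
      = ∫ ξ : ℂ, Set.indicator T h ‖ξ‖ := by
    rw [← integral_indicator hSmeas]
    refine integral_congr_ae (Filter.Eventually.of_forall fun ξ => ?_)
    have h2 := Set.indicator_comp_right (s := T) (fun ξ : ℂ => ‖ξ‖) (g := h) (x := ξ)
    exact h2
  have haar := MeasureTheory.integral_fun_norm_addHaar (volume : Measure ℂ) (Set.indicator T h)
  have hdim : Module.finrank ℝ ℂ = 2 := Complex.finrank_real_complex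
  rw [hdim] at haar
  have hball : (volume.real (Metric.ball (0:ℂ) 1)) = π := by
    simp [Measure.real, Complex.volume_ball]
  rw [hball] at haar
  -- 1D reduction
  set s := Real.sqrt c with hs
  have hinner : (∫ y in Set.Ioi (0:ℝ), y ^ (2-1) • Set.indicator T h y)
      = ∫ y in Set.Ioi s, y * h y := by
    have h1 : ∀ y ∈ Set.Ioi (0:ℝ), y ^ (2-1) • Set.indicator T h y
        = Set.indicator (Set.Ioi s) (fun y => y * h y) y := by
      intro y hy
      have hy0 : (0:ℝ) < y := hy
      have hiff : y ∈ T ↔ y ∈ Set.Ioi s := by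
        simp only [hT, Set.mem_setOf_eq, Set.mem_Ioi, hs]
        rw [Real.sqrt_lt' hy0]
      by_cases hyT : y ∈ T
      · rw [Set.indicator_of_mem hyT, Set.indicator_of_mem (hiff.mp hyT)]
        simp
      · rw [Set.indicator_of_notMem hyT, Set.indicator_of_notMem (fun hm => hyT (hiff.mpr hm))]
        simp
    rw [setIntegral_congr_fun measurableSet_Ioi h1, setIntegral_indicator measurableSet_Ioi]
    congr 1
    rw [Set.Ioi_inter_Ioi, max_eq_right (Real.sqrt_nonneg c)]
  have h1d : (∫ y in Set.Ioi s, y * h y) = Real.exp (-π * c) / π ^ 2 := by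
    rw [← saddle_1d c hc0]
    refine setIntegral_congr_fun measurableSet_Ioi (fun y _ => ?_)
    rw [hh, hc]
    ring
  rw [show ({ξ : ℂ | ‖ξ‖ ^ 2 > x ^ 2 / 2}) = {ξ : ℂ | ‖ξ‖ ^ 2 > c} from rfl]
  have hset : (∫ ξ in {ξ : ℂ | ‖ξ‖ ^ 2 > c},
      Real.exp (-π * ‖ξ‖ ^ 2) * (2 * ‖ξ‖ ^ 2 - x ^ 2))
      = 2 * π * (Real.exp (-π * c) / π ^ 2) := by
    calc (∫ ξ in {ξ : ℂ | ‖ξ‖ ^ 2 > c},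
        Real.exp (-π * ‖ξ‖ ^ 2) * (2 * ‖ξ‖ ^ 2 - x ^ 2))
        = ∫ ξ in {ξ : ℂ | ‖ξ‖ ^ 2 > c}, h (‖ξ‖) := rfl
      _ = ∫ ξ : ℂ, Set.indicator T h ‖ξ‖ := key
      _ = 2 • π • ∫ y in Set.Ioi (0:ℝ), y ^ (2-1) • Set.indicator T h y := haar
      _ = 2 * π * (Real.exp (-π * c) / π ^ 2) := by
          rw [hinner, h1d]; simp [smul_eq_mul]; ring
  rw [hset]
  have hexp : Real.exp (-π * c) * Real.exp (-π * x ^ 2) = Real.exp (-3 * π * x ^ 2 / 2) := by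
    rw [← Real.exp_add]; congr 1; rw [hc]; ring
  rw [← hexp]
  field_simp
  ring
end

section
/- For every real number x, the integral over all of ℂ of e^{-π|ξ|²}·|2|ξ|² - x²|, multiplied by 2/π, equals (2/π)x² - 4/π² + (8/π²)e^{-πx²/2}. That is, (2/π)∫_ℂ e^{-π|ξ|²} |2|ξ|² - x²| dA(ξ) = (2/π)x² - 4/π² + (8/π²)e^{-πx²/2}. (Equivalently, this total absolute-value integral is the sum of the local-maximum and saddle integrands of the paper: the integral splits over the regions |ξ|² < x²/2 and |ξ|² > x²/2.) -/
open MeasureTheory Real Set Filter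

theorem total_abs_integral (x : ℝ) :
    (2 / π) * ∫ ξ : ℂ, Real.exp (-π * ‖ξ‖ ^ 2) * |2 * ‖ξ‖ ^ 2 - x ^ 2| =
      (2 / π) * x ^ 2 - 4 / π ^ 2 + (8 / π ^ 2) * Real.exp (-π * x ^ 2 / 2) := by
  set c := |x| / Real.sqrt 2 with hc
  have hπ : (π : ℝ) ≠ 0 := pi_ne_zero
  have hc0 : 0 ≤ c := by positivity
  have hc2 : c ^ 2 = x ^ 2 / 2 := by
    rw [hc, div_pow, sq_abs, Real.sq_sqrt (by norm_num : (0:ℝ) ≤ 2)]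
  set G : ℝ → ℝ := fun r => Real.exp (-π * r ^ 2) * (-r ^ 2 / π + x ^ 2 / (2 * π) - 1 / π ^ 2)
    with hGdef
  have hG : ∀ r : ℝ, HasDerivAt G (r * Real.exp (-π * r ^ 2) * (2 * r ^ 2 - x ^ 2)) r := by
    intro r
    have h1 : HasDerivAt (fun r : ℝ => -π * r ^ 2) (-π * (2 * r)) r := by
      simpa using ((hasDerivAt_pow 2 r).const_mul (-π))
    have h2 : HasDerivAt (fun r : ℝ => -r ^ 2 / π + x ^ 2 / (2 * π) - 1 / π ^ 2)
        (-(2 * r) / π) r := by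
      have : HasDerivAt (fun r : ℝ => r ^ 2) (2 * r) r := by simpa using hasDerivAt_pow 2 r
      exact ((this.neg.div_const π).add_const (x ^ 2 / (2 * π))).sub_const (1 / π ^ 2)
    have := h1.exp.mul h2
    refine HasDerivAt.congr_deriv (f := G) this ?_
    field_simp
    ring
  -- the radial integrand with absolute value
  set f : ℝ → ℝ := fun r => r * (Real.exp (-π * r ^ 2) * |2 * r ^ 2 - x ^ 2|) with hfdef
  -- integrability of f on Ioi 0
  have hcontf : Continuous f := by
    apply continuous_id.mul (((continuous_const.mul (continuous_pow 2)).rexp).mul _)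
    exact ((continuous_const.mul (continuous_pow 2)).sub continuous_const).abs
  have hintf : IntegrableOn f (Ioi 0) := by
    have h1 : IntegrableOn (fun r : ℝ => r ^ (1:ℝ) * Real.exp (-π * r ^ 2)) (Ioi 0) :=
      integrableOn_rpow_mul_exp_neg_mul_sq pi_pos (by norm_num)
    have h3 : IntegrableOn (fun r : ℝ => r ^ (3:ℝ) * Real.exp (-π * r ^ 2)) (Ioi 0) :=
      integrableOn_rpow_mul_exp_neg_mul_sq pi_pos (by norm_num)
    refine Integrable.mono' ((h3.const_mul 2).add (h1.const_mul (x ^ 2)))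
      (hcontf.aestronglyMeasurable.restrict) ?_
    refine (ae_restrict_iff' measurableSet_Ioi).mpr (ae_of_all _ fun r hr => ?_)
    have hr0 : 0 < r := hr
    have he : 0 < Real.exp (-π * r ^ 2) := Real.exp_pos _
    have habs : |2 * r ^ 2 - x ^ 2| ≤ 2 * r ^ 2 + x ^ 2 := by
      rw [abs_sub_comm]
      calc |x ^ 2 - 2 * r ^ 2| ≤ |x ^ 2| + |2 * r ^ 2| := abs_sub _ _
        _ = 2 * r ^ 2 + x ^ 2 := by rw [abs_of_nonneg (by positivity), abs_of_nonneg (by positivity)]; ring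
    have h13 : r ^ (1:ℝ) = r := Real.rpow_one r
    have h33 : r ^ (3:ℝ) = r ^ 3 := by
      rw [show (3:ℝ) = ((3:ℕ):ℝ) by norm_num, Real.rpow_natCast]
    rw [Real.norm_eq_abs]
    simp only [Pi.add_apply, h13, h33, hfdef]
    rw [abs_of_nonneg (by positivity)]
    calc r * (Real.exp (-π * r ^ 2) * |2 * r ^ 2 - x ^ 2|)
        ≤ r * (Real.exp (-π * r ^ 2) * (2 * r ^ 2 + x ^ 2)) := by
          apply mul_le_mul_of_nonneg_left _ hr0.le
          exact mul_le_mul_of_nonneg_left habs he.le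
      _ = 2 * (r ^ 3 * Real.exp (-π * r ^ 2)) + x ^ 2 * (r * Real.exp (-π * r ^ 2)) := by ring
  -- Tendsto G atTop 0
  have hGtop : Tendsto G atTop (nhds 0) := by
    have h1 : Tendsto (fun r : ℝ => (π * r ^ 2) * Real.exp (-(π * r ^ 2))) atTop (nhds 0) := by
      have hcomp : Tendsto (fun r : ℝ => π * r ^ 2) atTop atTop :=
        (tendsto_pow_atTop two_ne_zero).const_mul_atTop pi_pos
      have := (tendsto_pow_mul_exp_neg_atTop_nhds_zero 1).comp hcomp
      simpa [Function.comp_def] using this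
    have h2 : Tendsto (fun r : ℝ => Real.exp (-(π * r ^ 2))) atTop (nhds 0) := by
      have hcomp : Tendsto (fun r : ℝ => π * r ^ 2) atTop atTop :=
        (tendsto_pow_atTop two_ne_zero).const_mul_atTop pi_pos
      exact Real.tendsto_exp_atBot.comp (tendsto_neg_atTop_atBot.comp hcomp)
    have heq : G = fun r => (-1 / π ^ 2) * ((π * r ^ 2) * Real.exp (-(π * r ^ 2)))
        + (x ^ 2 / (2 * π) - 1 / π ^ 2) * Real.exp (-(π * r ^ 2)) := by
      funext r
      rw [hGdef]
      simp only [neg_mul]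
      field_simp
      ring
    rw [heq]
    have := ((h1.const_mul ((-1:ℝ) / π ^ 2)).add (h2.const_mul (x ^ 2 / (2 * π) - 1 / π ^ 2)))
    simpa using this
  -- piece on Ioi c
  have hIoi : ∫ r in Ioi c, f r = -G c := by
    have hcongr : ∀ r ∈ Ioi c, f r = r * Real.exp (-π * r ^ 2) * (2 * r ^ 2 - x ^ 2) := by
      intro r hr
      have hrc : c < r := hr
      have h2 : x ^ 2 ≤ 2 * r ^ 2 := by
        have : c ^ 2 ≤ r ^ 2 := pow_le_pow_left₀ hc0 hrc.le 2
        nlinarith [hc2]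
      simp only [hfdef]
      rw [abs_of_nonneg (by linarith : (0:ℝ) ≤ 2 * r ^ 2 - x ^ 2)]
      ring
    rw [setIntegral_congr_fun measurableSet_Ioi hcongr]
    have hint : IntegrableOn (fun r => r * Real.exp (-π * r ^ 2) * (2 * r ^ 2 - x ^ 2)) (Ioi c) := by
      exact (hintf.mono (Ioi_subset_Ioi hc0) le_rfl).congr_fun
        (fun r hr => hcongr r hr) measurableSet_Ioi
    have := integral_Ioi_of_hasDerivAt_of_tendsto' (f := G)
      (fun r _ => hG r) hint hGtop
    rw [this]; ring
  -- piece on Ioc 0 c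
  have hIoc : ∫ r in Ioc 0 c, f r = G 0 - G c := by
    have hcongr : ∀ r ∈ Ioc 0 c, f r = -(r * Real.exp (-π * r ^ 2) * (2 * r ^ 2 - x ^ 2)) := by
      intro r hr
      have h2 : 2 * r ^ 2 ≤ x ^ 2 := by
        have : r ^ 2 ≤ c ^ 2 := pow_le_pow_left₀ hr.1.le hr.2 2
        nlinarith [hc2]
      simp only [hfdef]
      rw [abs_of_nonpos (by linarith : 2 * r ^ 2 - x ^ 2 ≤ (0:ℝ))]
      ring
    rw [setIntegral_congr_fun measurableSet_Ioc hcongr,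
      ← intervalIntegral.integral_of_le hc0, intervalIntegral.integral_neg]
    have := intervalIntegral.integral_eq_sub_of_hasDerivAt (f := G) (a := 0) (b := c)
      (fun r _ => hG r) ?_
    · rw [this]; ring
    · apply Continuous.intervalIntegrable
      exact (continuous_id.mul ((continuous_const.mul (continuous_pow 2)).rexp)).mul
        ((continuous_const.mul (continuous_pow 2)).sub continuous_const)
  -- combine radial pieces
  have hsplit : ∫ r in Ioi (0:ℝ), f r = G 0 - 2 * G c := by
    rw [← Ioc_union_Ioi_eq_Ioi hc0,
      setIntegral_union (Ioc_disjoint_Ioi le_rfl) measurableSet_Ioi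
        (hintf.mono Ioc_subset_Ioi_self le_rfl) (hintf.mono (Ioi_subset_Ioi hc0) le_rfl),
      hIoc, hIoi]
    ring
  -- polar coordinates
  have hpolar : (∫ ξ : ℂ, Real.exp (-π * ‖ξ‖ ^ 2) * |2 * ‖ξ‖ ^ 2 - x ^ 2|)
      = 2 * (π * ∫ r in Ioi (0:ℝ), f r) := by
    have := integral_fun_norm_addHaar (volume : Measure ℂ)
      (fun y : ℝ => Real.exp (-π * y ^ 2) * |2 * y ^ 2 - x ^ 2|)
    have hb : (volume (Metric.ball (0:ℂ) 1)).toReal = π := by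
      rw [Complex.volume_ball]
      simp [NNReal.coe_real_pi]
    have hinner : ∫ y in Ioi (0:ℝ), y ^ (Module.finrank ℝ ℂ - 1) •
        (Real.exp (-π * y ^ 2) * |2 * y ^ 2 - x ^ 2|) = ∫ r in Ioi (0:ℝ), f r := by
      apply setIntegral_congr_fun measurableSet_Ioi
      intro y _
      simp [Complex.finrank_real_complex, hfdef, pow_one]
    rw [this, hinner, measureReal_def, hb]
    simp [Complex.finrank_real_complex, smul_eq_mul]
  rw [hpolar, hsplit]
  simp only [hGdef]
  have hGc : Real.exp (-π * c ^ 2) * (-c ^ 2 / π + x ^ 2 / (2 * π) - 1 / π ^ 2)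
      = Real.exp (-π * x ^ 2 / 2) * (-(1 / π ^ 2)) := by
    rw [hc2]
    congr 1
    · congr 1; ring
    · field_simp
      ring

  rw [hGc]
  norm_num
  field_simp
  ring
end

section
/- For every real number x, ∫_ℂ e^{-π|ξ|²/2}·(π|ξ|² - 2)·||ξ|² - x²| dA(ξ) = -8/π + e^{-πx²/2}·(8x² + 16/π). -/
open MeasureTheory Real

open Set Filter

lemma aux_pow_exp_integrable (n : ℕ) :
    Integrable (fun r : ℝ => r ^ n * Real.exp (-(π/2) * r ^ 2)) := by
  have h := integrable_rpow_mul_exp_neg_mul_sq (b := π/2) (by positivity)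
    (s := (n : ℝ)) (lt_of_lt_of_le neg_one_lt_zero (Nat.cast_nonneg n))
  simpa [Real.rpow_natCast] using h

lemma aux_tendsto (n : ℕ) {c : ℝ} (hc : 0 < c) :
    Tendsto (fun t : ℝ => t ^ n * Real.exp (-(c * t))) atTop (nhds 0) := by
  have h1 : Tendsto (fun t : ℝ => c * t) atTop atTop :=
    Tendsto.const_mul_atTop hc tendsto_id
  have h := (tendsto_pow_mul_exp_neg_atTop_nhds_zero n).comp h1
  have h2 := h.const_mul ((c : ℝ) ^ n)⁻¹
  rw [mul_zero] at h2
  refine h2.congr fun t => ?_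
  simp only [Function.comp]
  rw [mul_pow]
  field_simp

lemma aux_hasDerivAt (x : ℝ) (r : ℝ) :
    HasDerivAt (fun r : ℝ => Real.exp (-(π/2) * r ^ 2) *
        (r ^ 4 - x ^ 2 * r ^ 2 + (2/π) * r ^ 2 + 4/π ^ 2))
      (r * (Real.exp (-(π/2) * r ^ 2) * (π * r ^ 2 - 2) * (x ^ 2 - r ^ 2))) r := by
  have he : HasDerivAt (fun r : ℝ => Real.exp (-(π/2) * r ^ 2))
      (Real.exp (-(π/2) * r ^ 2) * (-(π/2) * (2 * r))) r := by
    have h1 : HasDerivAt (fun r : ℝ => -(π/2) * r ^ 2) (-(π/2) * (2 * r)) r := by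
      simpa using (hasDerivAt_pow 2 r).const_mul (-(π/2))
    exact h1.exp
  have hp : HasDerivAt (fun r : ℝ => r ^ 4 - x ^ 2 * r ^ 2 + (2/π) * r ^ 2 + 4/π ^ 2)
      (4 * r ^ 3 - x ^ 2 * (2 * r) + (2/π) * (2 * r)) r := by
    have h4 : HasDerivAt (fun r : ℝ => r ^ 4) (4 * r ^ 3) r := by
      simpa using hasDerivAt_pow 4 r
    have h2 : HasDerivAt (fun r : ℝ => r ^ 2) (2 * r) r := by
      simpa using hasDerivAt_pow 2 r
    simpa using (((h4.sub (h2.const_mul (x ^ 2))).add (h2.const_mul (2/π))).add_const (4/π^2))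
  have := he.mul hp
  refine this.congr_deriv ?_
  have hπ : (π : ℝ) ≠ 0 := Real.pi_ne_zero
  field_simp
  ring

lemma aux_onedim (x : ℝ) :
    ∫ r in Ioi (0:ℝ),
        r * (Real.exp (-(π/2) * r ^ 2) * (π * r ^ 2 - 2) * |r ^ 2 - x ^ 2|)
      = Real.exp (-(π/2) * x ^ 2) * (4 * x ^ 2 / π + 8 / π ^ 2) - 4 / π ^ 2 := by
  have hπ : (π : ℝ) ≠ 0 := Real.pi_ne_zero
  set b := |x| with hbdef
  have hb0 : (0:ℝ) ≤ b := abs_nonneg x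
  have hb2 : b ^ 2 = x ^ 2 := sq_abs x
  set H : ℝ → ℝ := fun r => Real.exp (-(π/2) * r ^ 2) *
      (r ^ 4 - x ^ 2 * r ^ 2 + (2/π) * r ^ 2 + 4/π ^ 2) with hHdef
  set f : ℝ → ℝ := fun r =>
      r * (Real.exp (-(π/2) * r ^ 2) * (π * r ^ 2 - 2) * |r ^ 2 - x ^ 2|) with hfdef
  have hfcont : Continuous f := by fun_prop
  have hint : Integrable (fun r : ℝ => π * (r ^ 5 * Real.exp (-(π/2) * r ^ 2))
      - (π * x ^ 2 + 2) * (r ^ 3 * Real.exp (-(π/2) * r ^ 2))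
      + (2 * x ^ 2) * (r ^ 1 * Real.exp (-(π/2) * r ^ 2))) :=
    (((aux_pow_exp_integrable 5).const_mul π).sub
      ((aux_pow_exp_integrable 3).const_mul _)).add
      ((aux_pow_exp_integrable 1).const_mul _)
  have hfIoi : IntegrableOn f (Ioi b) := by
    refine (hint.integrableOn).congr_fun (fun r hr => ?_) measurableSet_Ioi
    have hrb : b < r := hr
    have hx2 : x ^ 2 ≤ r ^ 2 := by rw [← hb2]; nlinarith
    simp only [hfdef]
    rw [abs_of_nonneg (by linarith)]
    ring
  have hfIoc : IntegrableOn f (Ioc 0 b) := hfcont.integrableOn_Ioc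
  have h1 : ∫ r in Ioc (0:ℝ) b, f r = H b - H 0 := by
    rw [← intervalIntegral.integral_of_le hb0]
    rw [intervalIntegral.integral_congr
      (g := fun r => r * (Real.exp (-(π/2) * r ^ 2) * (π * r ^ 2 - 2) * (x ^ 2 - r ^ 2)))
      (fun t ht => ?_)]
    · exact intervalIntegral.integral_eq_sub_of_hasDerivAt
        (fun t _ => aux_hasDerivAt x t) (Continuous.intervalIntegrable (by fun_prop) _ _)
    · rw [uIcc_of_le hb0] at ht
      have h0t : 0 ≤ t := ht.1
      have htx : t ^ 2 ≤ x ^ 2 := by rw [← hb2]; nlinarith [ht.2]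
      simp only [hfdef]
      rw [abs_of_nonpos (by linarith)]
      ring
  have h2 : ∫ r in Ioi b, f r = H b := by
    rw [setIntegral_congr_fun measurableSet_Ioi
      (g := fun r => r * (Real.exp (-(π/2) * r ^ 2) * (π * r ^ 2 - 2) * (r ^ 2 - x ^ 2)))
      (fun r hr => ?_)]
    · have hd : ∀ r ∈ Ici b, HasDerivAt (fun r => -H r)
          (r * (Real.exp (-(π/2) * r ^ 2) * (π * r ^ 2 - 2) * (r ^ 2 - x ^ 2))) r := by
        intro r _
        have := (aux_hasDerivAt x r).neg
        refine this.congr_deriv ?_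
        ring
      have hint' : IntegrableOn
          (fun r => r * (Real.exp (-(π/2) * r ^ 2) * (π * r ^ 2 - 2) * (r ^ 2 - x ^ 2)))
          (Ioi b) :=
        (hint.integrableOn).congr_fun (fun r _ => by ring) measurableSet_Ioi
      have hc : (0:ℝ) < π/2 := by positivity
      have ht2 : Tendsto (fun r : ℝ => r ^ 2) atTop atTop :=
        tendsto_pow_atTop two_ne_zero
      have T : ∀ n : ℕ, Tendsto (fun r : ℝ => (r ^ 2) ^ n * Real.exp (-(π/2) * r ^ 2))
          atTop (nhds 0) := by
        intro n
        refine ((aux_tendsto n hc).comp ht2).congr fun r => ?_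
        simp [Function.comp, neg_mul]
      have htendH : Tendsto H atTop (nhds 0) := by
        have h2' := T 2
        have h1' := (T 1).const_mul (-(x ^ 2) + 2/π)
        have h0' := (T 0).const_mul (4/π ^ 2)
        have hsum := (h2'.add h1').add h0'
        simp only [mul_zero, add_zero] at hsum
        refine hsum.congr fun r => ?_
        simp only [hHdef]
        ring
      have := integral_Ioi_of_hasDerivAt_of_tendsto' hd hint' htendH.neg
      rw [this]
      simp
    · have hrb : b < r := hr
      have hx2 : x ^ 2 ≤ r ^ 2 := by rw [← hb2]; nlinarith
      simp only [hfdef]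
      rw [abs_of_nonneg (by linarith)]
  rw [← Ioc_union_Ioi_eq_Ioi hb0,
    setIntegral_union (Ioc_disjoint_Ioi le_rfl) measurableSet_Ioi hfIoc hfIoi]
  rw [show (∫ r in Ioc (0:ℝ) b, f r) = H b - H 0 from h1, h2]
  have hHb : H b = Real.exp (-(π/2) * x ^ 2) * ((2/π) * x ^ 2 + 4/π ^ 2) := by
    simp only [hHdef]
    rw [show b ^ 4 = (b ^ 2) ^ 2 by ring, hb2]
    ring
  have hH0 : H 0 = 4/π ^ 2 := by simp [hHdef]
  rw [hHb, hH0]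
  ring

theorem second_order_integral_eval (x : ℝ) :
    ∫ ξ : ℂ, Real.exp (-π * ‖ξ‖ ^ 2 / 2) * (π * ‖ξ‖ ^ 2 - 2) *
        |‖ξ‖ ^ 2 - x ^ 2| =
      -8 / π + Real.exp (-π * x ^ 2 / 2) * (8 * x ^ 2 + 16 / π) := by
  have hπ : (π : ℝ) ≠ 0 := Real.pi_ne_zero
  have harg : ∀ r : ℝ, -π * r ^ 2 / 2 = -(π/2) * r ^ 2 := fun r => by ring
  simp_rw [harg]
  set F : ℝ → ℝ := fun r =>
    Real.exp (-(π/2) * r ^ 2) * (π * r ^ 2 - 2) * |r ^ 2 - x ^ 2| with hF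
  calc ∫ ξ : ℂ, Real.exp (-(π/2) * ‖ξ‖ ^ 2) * (π * ‖ξ‖ ^ 2 - 2) *
        |‖ξ‖ ^ 2 - x ^ 2|
      = ∫ p in Set.Ioi (0:ℝ) ×ˢ Set.Ioo (-π) π, p.1 * F |p.1| := by
        rw [← Complex.integral_comp_polarCoord_symm (fun ξ => F (‖ξ‖)),
          polarCoord_target]
        simp_rw [Complex.norm_polarCoord_symm, smul_eq_mul]
    _ = (∫ r in Ioi (0:ℝ), r * F |r|) * ∫ _ in Ioo (-π) π, (1:ℝ) := by
        rw [← setIntegral_prod_mul, Measure.volume_eq_prod]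
        simp_rw [mul_one]
    _ = 2 * π * ∫ r in Ioi (0:ℝ), r * F r := by
        simp_rw [integral_const, measureReal_restrict_apply_univ,
          Real.volume_real_Ioo, sub_neg_eq_add, ← two_mul,
          max_eq_left (by positivity : 0 ≤ 2 * π), smul_eq_mul, mul_one, mul_comm]
        congr 1
        refine setIntegral_congr_fun measurableSet_Ioi (fun r hr => ?_)
        rw [abs_of_pos hr]
    _ = -8 / π + Real.exp (-(π/2) * x ^ 2) * (8 * x ^ 2 + 16 / π) := by
        have h := aux_onedim x
        simp only [hF]
        rw [show (∫ r in Ioi (0:ℝ), r * (Real.exp (-(π/2) * r ^ 2) * (π * r ^ 2 - 2) *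
          |r ^ 2 - x ^ 2|)) = Real.exp (-(π/2) * x ^ 2) * (4 * x ^ 2 / π + 8 / π ^ 2)
          - 4 / π ^ 2 from h]
        field_simp
        ring
end

section
/- For every real number x and every real constant χ, -(χπ²x/4)·e^{-πx²}·∫_ℂ e^{-π|ξ|²/2}·(π|ξ|² - 2)·||ξ|² - x²| dA(ξ) = χ·x·e^{-πx²}·(2π - (2π²x² + 4π)e^{-πx²/2}). In particular, the second order term F_∞ of the expected density of critical values on a Riemann surface with Euler characteristic χ admits the closed form F_∞(x) = χ x e^{-πx²}(2π - (2π²x² + 4π)e^{-πx²/2}). -/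
open MeasureTheory Real Set Filter Topology

noncomputable def Phi (a r : ℝ) : ℝ :=
  (-r ^ 2 * (r ^ 2 - a) - 2 * r ^ 2 / π - 4 / π ^ 2) * Real.exp (-π * r ^ 2 / 2)

lemma Phi_hasDerivAt (a r : ℝ) :
    HasDerivAt (Phi a) (r * (π * r ^ 2 - 2) * (r ^ 2 - a) * Real.exp (-π * r ^ 2 / 2)) r := by
  have hp : HasDerivAt (fun r : ℝ => -r ^ 2 * (r ^ 2 - a) - 2 * r ^ 2 / π - 4 / π ^ 2)
      (-(2 * r) * (r ^ 2 - a) - r ^ 2 * (2 * r) - 2 * (2 * r) / π) r := by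
    have h1 : HasDerivAt (fun r : ℝ => r ^ 2) (2 * r) r := by
      simpa using hasDerivAt_pow 2 r
    have h2 : HasDerivAt (fun r : ℝ => r ^ 2 - a) (2 * r) r := h1.sub_const a
    have := (h1.neg.mul h2)
    have h3 := this.sub ((h1.const_mul 2).div_const π)
    have h4 := h3.sub_const (4 / π ^ 2)
    refine h4.congr_deriv ?_
    simp only [Pi.neg_apply]
    ring
  have he : HasDerivAt (fun r : ℝ => Real.exp (-π * r ^ 2 / 2))
      ((-π * r) * Real.exp (-π * r ^ 2 / 2)) r := by
    have h1 : HasDerivAt (fun r : ℝ => -π * r ^ 2 / 2) (-π * r) r := by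
      have := ((hasDerivAt_pow 2 r).const_mul (-π)).div_const 2
      refine this.congr_deriv ?_
      ring
    have := h1.exp
    convert this using 1
    ring
  have := hp.mul he
  refine this.congr_deriv ?_
  have hπ : (π : ℝ) ≠ 0 := Real.pi_ne_zero
  field_simp
  ring

lemma tendsto_pow_exp (n : ℕ) :
    Tendsto (fun t : ℝ => t ^ n * Real.exp (-π * t / 2)) atTop (𝓝 0) := by
  have h2 : Tendsto (fun t : ℝ => π * t / 2) atTop atTop :=
    (tendsto_id.const_mul_atTop Real.pi_pos).atTop_div_const two_pos
  have h3 := (Real.tendsto_pow_mul_exp_neg_atTop_nhds_zero n).comp h2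
  have h4 : Tendsto (fun t : ℝ => (2 / π) ^ n * ((π * t / 2) ^ n * Real.exp (-(π * t / 2))))
      atTop (𝓝 ((2 / π) ^ n * 0)) := h3.const_mul _
  rw [mul_zero] at h4
  refine h4.congr fun t => ?_
  rw [← mul_assoc, ← mul_pow]
  have hπ : (π : ℝ) ≠ 0 := Real.pi_ne_zero
  congr 2
  · field_simp
  · ring

lemma Phi_tendsto (a : ℝ) : Tendsto (Phi a) atTop (𝓝 0) := by
  have key : Tendsto (fun t : ℝ => (-t * (t - a) - 2 * t / π - 4 / π ^ 2) * Real.exp (-π * t / 2))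
      atTop (𝓝 0) := by
    have h := (((tendsto_pow_exp 2).const_mul (-1 : ℝ)).add
      ((tendsto_pow_exp 1).const_mul (a - 2 / π))).add
      ((tendsto_pow_exp 0).const_mul (-(4 / π ^ 2)))
    simp only [mul_zero, add_zero] at h
    refine h.congr fun t => ?_
    ring
  have hsq : Tendsto (fun r : ℝ => r ^ 2) atTop atTop := tendsto_pow_atTop two_ne_zero
  have := key.comp hsq
  refine this.congr fun r => ?_
  simp only [Function.comp_apply, Phi]

lemma integrable_pow_exp_Ioi (n : ℕ) :
    IntegrableOn (fun t : ℝ => t ^ n * Real.exp (-π * t ^ 2 / 2)) (Set.Ioi 0) := by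
  have hb : (0 : ℝ) < π / 2 := by positivity
  have hs : (-1 : ℝ) < (n : ℝ) := lt_of_lt_of_le (by norm_num) (Nat.cast_nonneg n)
  have h := (integrable_rpow_mul_exp_neg_mul_sq hb hs).integrableOn (s := Set.Ioi 0)
  refine h.congr_fun (fun t ht => ?_) measurableSet_Ioi
  dsimp only
  rw [Real.rpow_natCast]
  congr 1
  ring

lemma integrable_main (x : ℝ) :
    IntegrableOn (fun t : ℝ => t * (π * t ^ 2 - 2) * |t ^ 2 - x ^ 2| * Real.exp (-π * t ^ 2 / 2))
      (Set.Ioi 0) := by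
  set a := x ^ 2 with ha
  have ha0 : 0 ≤ a := sq_nonneg x
  have hB : IntegrableOn (fun t : ℝ => π * (t ^ 5 * Real.exp (-π * t ^ 2 / 2)) +
      ((π * a + 2) * (t ^ 3 * Real.exp (-π * t ^ 2 / 2)) +
        (2 * a) * (t ^ 1 * Real.exp (-π * t ^ 2 / 2)))) (Set.Ioi 0) :=
    ((integrable_pow_exp_Ioi 5).const_mul π).add
      (((integrable_pow_exp_Ioi 3).const_mul _).add ((integrable_pow_exp_Ioi 1).const_mul _))
  refine hB.mono' ?_ ?_
  · refine Continuous.aestronglyMeasurable ?_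
    fun_prop
  · filter_upwards [ae_restrict_mem measurableSet_Ioi] with t ht
    have ht0 : (0 : ℝ) < t := ht
    have he : (0 : ℝ) < Real.exp (-π * t ^ 2 / 2) := Real.exp_pos _
    have h1 : |π * t ^ 2 - 2| ≤ π * t ^ 2 + 2 := by
      rw [abs_le]
      constructor <;> nlinarith [Real.pi_pos, sq_nonneg t]
    have h2 : |t ^ 2 - a| ≤ t ^ 2 + a := by
      rw [abs_le]
      constructor <;> nlinarith [sq_nonneg t]
    calc ‖t * (π * t ^ 2 - 2) * |t ^ 2 - a| * Real.exp (-π * t ^ 2 / 2)‖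
        = t * (|π * t ^ 2 - 2| * (|t ^ 2 - a| * Real.exp (-π * t ^ 2 / 2))) := by
          rw [Real.norm_eq_abs, abs_mul, abs_mul, abs_mul, abs_of_pos ht0, abs_of_pos he,
            abs_abs]
          ring
      _ ≤ t * ((π * t ^ 2 + 2) * ((t ^ 2 + a) * Real.exp (-π * t ^ 2 / 2))) := by
          gcongr
      _ = π * (t ^ 5 * Real.exp (-π * t ^ 2 / 2)) +
          ((π * a + 2) * (t ^ 3 * Real.exp (-π * t ^ 2 / 2)) +
            (2 * a) * (t ^ 1 * Real.exp (-π * t ^ 2 / 2))) := by ring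

lemma tail_integral (x : ℝ) :
    ∫ t in Set.Ioi |x|, t * (π * t ^ 2 - 2) * |t ^ 2 - x ^ 2| * Real.exp (-π * t ^ 2 / 2)
      = (2 * x ^ 2 / π + 4 / π ^ 2) * Real.exp (-π * x ^ 2 / 2) := by
  have habs : ∀ t ∈ Set.Ioi |x|, |t ^ 2 - x ^ 2| = t ^ 2 - x ^ 2 := by
    intro t ht
    have h0 : |x| ≤ t := le_of_lt ht
    have : x ^ 2 ≤ t ^ 2 := by nlinarith [abs_nonneg x, sq_abs x]
    exact abs_of_nonneg (by linarith)
  rw [setIntegral_congr_fun measurableSet_Ioi (fun t ht => by rw [habs t ht])]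
  have hint : IntegrableOn
      (fun t : ℝ => t * (π * t ^ 2 - 2) * (t ^ 2 - x ^ 2) * Real.exp (-π * t ^ 2 / 2))
      (Set.Ioi |x|) := by
    refine (((integrable_main x).mono_set (Set.Ioi_subset_Ioi (abs_nonneg x))).congr_fun
      (fun t ht => by dsimp only; rw [habs t ht]) measurableSet_Ioi)
  have key := integral_Ioi_of_hasDerivAt_of_tendsto
    (f := Phi (x ^ 2))
    (f' := fun t => t * (π * t ^ 2 - 2) * (t ^ 2 - x ^ 2) * Real.exp (-π * t ^ 2 / 2))
    (a := |x|)
    ((Phi_hasDerivAt (x ^ 2) |x|).continuousAt.continuousWithinAt)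
    (fun t _ => Phi_hasDerivAt (x ^ 2) t) hint (Phi_tendsto (x ^ 2))
  rw [key]
  simp only [Phi, sq_abs]
  ring

lemma head_integral (x : ℝ) :
    ∫ t in Set.Ioc 0 |x|, t * (π * t ^ 2 - 2) * |t ^ 2 - x ^ 2| * Real.exp (-π * t ^ 2 / 2)
      = (2 * x ^ 2 / π + 4 / π ^ 2) * Real.exp (-π * x ^ 2 / 2) - 4 / π ^ 2 := by
  have habs : ∀ t ∈ Set.Ioc 0 |x|, |t ^ 2 - x ^ 2| = x ^ 2 - t ^ 2 := by
    intro t ht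
    have h0 : 0 < t := ht.1
    have h1 : t ≤ |x| := ht.2
    have : t ^ 2 ≤ x ^ 2 := by nlinarith [sq_abs x]
    rw [abs_of_nonpos (by linarith)]
    ring
  rw [setIntegral_congr_fun measurableSet_Ioc (fun t ht => by rw [habs t ht])]
  rw [← intervalIntegral.integral_of_le (abs_nonneg x)]
  have key := intervalIntegral.integral_eq_sub_of_hasDerivAt
    (f := fun r => -Phi (x ^ 2) r)
    (f' := fun t => t * (π * t ^ 2 - 2) * (x ^ 2 - t ^ 2) * Real.exp (-π * t ^ 2 / 2))
    (a := (0 : ℝ)) (b := |x|)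
    (fun t _ => by
      have := (Phi_hasDerivAt (x ^ 2) t).neg
      convert this using 1
      · rfl
      ring)
    (by
      apply Continuous.intervalIntegrable
      fun_prop)
  rw [key]
  simp only [Phi, sq_abs]
  simp only [ne_eq, OfNat.ofNat_ne_zero, not_false_eq_true, zero_pow, neg_zero, zero_mul,
    mul_zero, zero_div, Real.exp_zero]
  ring

theorem second_order_term_closed_form (x χ : ℝ) :
    -(χ * π ^ 2 * x / 4) * Real.exp (-π * x ^ 2) *
        ∫ ξ : ℂ, Real.exp (-π * ‖ξ‖ ^ 2 / 2) * (π * ‖ξ‖ ^ 2 - 2) *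
          |‖ξ‖ ^ 2 - x ^ 2| =
      χ * x * Real.exp (-π * x ^ 2) *
        (2 * π - (2 * π ^ 2 * x ^ 2 + 4 * π) * Real.exp (-π * x ^ 2 / 2)) := by
  have hpoly : ∫ ξ : ℂ, Real.exp (-π * ‖ξ‖ ^ 2 / 2) * (π * ‖ξ‖ ^ 2 - 2) *
      |‖ξ‖ ^ 2 - x ^ 2|
      = (2 : ℕ) • (volume (Metric.ball (0 : ℂ) 1)).toReal •
        ∫ y in Set.Ioi (0 : ℝ), y ^ (2 - 1) •
          (Real.exp (-π * y ^ 2 / 2) * (π * y ^ 2 - 2) * |y ^ 2 - x ^ 2|) := by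
    have h := integral_fun_norm_addHaar (volume : Measure ℂ)
      (fun r : ℝ => Real.exp (-π * r ^ 2 / 2) * (π * r ^ 2 - 2) * |r ^ 2 - x ^ 2|)
    simp only [Complex.finrank_real_complex] at h
    exact h
  have hball : (volume (Metric.ball (0 : ℂ) 1)).toReal = π := by
    rw [Complex.volume_ball]
    simp
  have hsplit : (∫ y in Set.Ioi (0 : ℝ), y ^ (2 - 1) •
      (Real.exp (-π * y ^ 2 / 2) * (π * y ^ 2 - 2) * |y ^ 2 - x ^ 2|))
      = (4 * x ^ 2 / π + 8 / π ^ 2) * Real.exp (-π * x ^ 2 / 2) - 4 / π ^ 2 := by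
    have hform : (∫ y in Set.Ioi (0 : ℝ), y ^ (2 - 1) •
        (Real.exp (-π * y ^ 2 / 2) * (π * y ^ 2 - 2) * |y ^ 2 - x ^ 2|))
        = ∫ t in Set.Ioi (0 : ℝ),
            t * (π * t ^ 2 - 2) * |t ^ 2 - x ^ 2| * Real.exp (-π * t ^ 2 / 2) := by
      refine setIntegral_congr_fun measurableSet_Ioi (fun t _ => ?_)
      simp only [pow_one, smul_eq_mul]
      ring
    rw [hform]
    have hunion : Set.Ioi (0 : ℝ) = Set.Ioc 0 |x| ∪ Set.Ioi |x| :=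
      (Set.Ioc_union_Ioi_eq_Ioi (abs_nonneg x)).symm
    rw [hunion, setIntegral_union (Set.Ioc_disjoint_Ioi le_rfl) measurableSet_Ioi
      (((integrable_main x).mono_set (by rw [hunion]; exact Set.subset_union_left)))
      (((integrable_main x).mono_set (by rw [hunion]; exact Set.subset_union_right)))]
    rw [head_integral, tail_integral]
    ring
  rw [hpoly, hball, hsplit]
  have hπ : (π : ℝ) ≠ 0 := Real.pi_ne_zero
  simp only [smul_eq_mul, nsmul_eq_mul, Nat.cast_ofNat]
  field_simp
  ring
end
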